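/- Let A ∈ {0,1}^{N×N} be symmetric with zero diagonal, Θ ∈ (0,1)^{K×K}, and p(a|θ) = θ^a(1−θ)^{1−a}. For τ ∈ ℝ₊^{N×K} with ∑_k τ_{ik} = 1 for every i, define the mean-field ELBO 𝓛(τ,Θ,α) := (1/2)∑_{i≠j}∑_{k,l} τ_{ik} τ_{jl} log p(A_{ij}|Θ_{kl}) − ∑_{i,k} τ_{ik} log τ_{ik} + ∑_k (∑_i τ_{ik}) log α_k. Set α̂_k := N^{-1} ∑_i τ_{ik} and T := τ/N ∈ 𝒰_K(1_N/N). Then, with the conventions 0·log 0 = 0 and log p(A_{ii}|Θ_{kl}) = 0, one has 𝓛(τ,Θ,α̂) = (N²/2)·[ ∑_{i,j,k,l} log p(A_{ij}|Θ_{kl}) T_{ik} T_{jl} + (2/N)( H(T) − H(T^⊤ 1_N) ) ] − N log N, where H(T) := −∑_{i,k} T_{ik} log T_{ik} and H(T^⊤1_N) := −∑_k (∑_i T_{ik}) log(∑_i T_{ik}). Consequently, maximizing the ELBO over (τ,Θ) with α = α̂ is equivalent to minimizing ( −∑_{i,j,k,l} log p(A_{ij}|Θ_{kl}) T_{ik}T_{jl}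 − (2/N)[H(T) − H(T^⊤1_N)] ) over T ∈ 𝒰_K(1_N/N) and Θ. -/

import Mathlib

open Finset

/-- `𝒰_K(1_N/N)`: matrices `T ∈ ℝ^{N×K}` with nonnegative entries whose rows sum to `1/N`. -/
def UK (N K : ℕ) : Set (Matrix (Fin N) (Fin K) ℝ) :=
  {T | (∀ i k, 0 ≤ T i k) ∧ ∀ i, ∑ k, T i k = 1 / (N : ℝ)}

/-- Bernoulli model `p(a|θ) = θ^a (1−θ)^{1−a}` (real exponents). -/
noncomputable def pBer (a θ : ℝ) : ℝ := θ ^ a * (1 - θ) ^ (1 - a)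

/-- `log p(A_{ij}|Θ_{kl})` with the convention `log p(A_{ii}|Θ_{kl}) = 0`. -/
noncomputable def logpConv {N K : ℕ} (A : Matrix (Fin N) (Fin N) ℝ)
    (Θ : Matrix (Fin K) (Fin K) ℝ) (i j : Fin N) (k l : Fin K) : ℝ :=
  if i = j then 0 else Real.log (pBer (A i j) (Θ k l))

/-- Mean-field ELBO `𝓛(τ,Θ,α)` (the `i ≠ j` restriction is encoded in `logpConv`,
and Lean's convention `log 0 = 0` realizes `0 · log 0 = 0`). -/
noncomputable def ELBO {N K : ℕ} (A : Matrix (Fin N) (Fin N) ℝ)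
    (Θ : Matrix (Fin K) (Fin K) ℝ) (τ : Fin N → Fin K → ℝ) (α : Fin K → ℝ) : ℝ :=
  (1 / 2) * ∑ i, ∑ j, ∑ k, ∑ l, τ i k * τ j l * logpConv A Θ i j k l
    - ∑ i, ∑ k, τ i k * Real.log (τ i k)
    + ∑ k, (∑ i, τ i k) * Real.log (α k)

/-- Entropy `H(T) = −∑_{i,k} T_{ik} log T_{ik}`. -/
noncomputable def Hent {N K : ℕ} (T : Fin N → Fin K → ℝ) : ℝ :=
  -∑ i, ∑ k, T i k * Real.log (T i k)

/-- Entropy of the second marginal, `H(T^⊤ 1_N) = −∑_k (∑_i T_{ik}) log (∑_i T_{ik})`. -/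
noncomputable def HentCol {N K : ℕ} (T : Fin N → Fin K → ℝ) : ℝ :=
  -∑ k, (∑ i, T i k) * Real.log (∑ i, T i k)

/-- The (to-be-minimized) entropic srGW objective
`−∑ log p(A_{ij}|Θ_{kl}) T_{ik}T_{jl} − (2/N)[H(T) − H(T^⊤1_N)]`. -/
noncomputable def Jobj {N K : ℕ} (A : Matrix (Fin N) (Fin N) ℝ)
    (Θ : Matrix (Fin K) (Fin K) ℝ) (T : Fin N → Fin K → ℝ) : ℝ :=
  -∑ i, ∑ j, ∑ k, ∑ l, logpConv A Θ i j k l * T i k * T j l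
    - (2 / (N : ℝ)) * (Hent T - HentCol T)


lemma xlog_div (n x : ℝ) (hn : n ≠ 0) (hx : 0 ≤ x) :
    x * Real.log (x / n) = x * Real.log x - x * Real.log n := by
  rcases hx.eq_or_lt with h | h
  · simp [← h]
  · rw [Real.log_div h.ne' hn]; ring

lemma key {N K : ℕ} (hN : 0 < N)
    (A : Matrix (Fin N) (Fin N) ℝ) (Θ : Matrix (Fin K) (Fin K) ℝ)
    (τ : Fin N → Fin K → ℝ) (hτ : ∀ i k, 0 ≤ τ i k) (hsum : ∀ i, ∑ k, τ i k = 1) :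
    ELBO A Θ τ (fun k => (∑ i, τ i k) / N) =
      ((N : ℝ) ^ 2 / 2) *
          (∑ i, ∑ j, ∑ k, ∑ l,
              logpConv A Θ i j k l * (τ i k / N) * (τ j l / N)
            + (2 / (N : ℝ)) *
              (Hent (fun i k => τ i k / N) - HentCol (fun i k => τ i k / N)))
        - (N : ℝ) * Real.log N := by
  have hNR : (N : ℝ) ≠ 0 := Nat.cast_ne_zero.mpr hN.ne'
  set Q := ∑ i, ∑ k, τ i k * Real.log (τ i k) with hQ
  set C := ∑ k, (∑ i, τ i k) * Real.log (∑ i, τ i k) with hC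
  set S := ∑ i, ∑ j, ∑ k, ∑ l, τ i k * τ j l * logpConv A Θ i j k l with hS
  have hsum2 : ∑ i, ∑ k, τ i k = (N : ℝ) := by simp [hsum]
  have hcsum : ∑ k : Fin K, ∑ i, τ i k = (N : ℝ) := by rw [Finset.sum_comm]; exact hsum2
  have h1 : (∑ i, ∑ j, ∑ k, ∑ l, logpConv A Θ i j k l * (τ i k / N) * (τ j l / N))
      = S * ((N : ℝ) ^ 2)⁻¹ := by
    rw [hS, Finset.sum_mul]
    refine Finset.sum_congr rfl fun i _ => ?_
    rw [Finset.sum_mul]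
    refine Finset.sum_congr rfl fun j _ => ?_
    rw [Finset.sum_mul]
    refine Finset.sum_congr rfl fun k _ => ?_
    rw [Finset.sum_mul]
    refine Finset.sum_congr rfl fun l _ => ?_
    field_simp
  have key2 : ∀ x : ℝ, 0 ≤ x →
      (x / N) * Real.log (x / N) = (x * Real.log x) / N - (x * Real.log N) / N := by
    intro x hx
    rw [div_mul_eq_mul_div, xlog_div _ _ hNR hx, sub_div]
  have h2 : Hent (fun i k => τ i k / N) = -(Q / N) + Real.log N := by
    rw [Hent]
    have e : ∀ i : Fin N, ∑ k, (τ i k / N) * Real.log (τ i k / N)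
        = (∑ k, τ i k * Real.log (τ i k)) / N - (∑ k, τ i k * Real.log N) / N := by
      intro i
      rw [Finset.sum_congr rfl fun k _ => key2 _ (hτ i k), Finset.sum_sub_distrib,
        ← Finset.sum_div, ← Finset.sum_div]
    simp only [e]
    rw [Finset.sum_sub_distrib, ← Finset.sum_div, ← Finset.sum_div, ← hQ]
    simp only [← Finset.sum_mul]
    rw [hsum2]
    field_simp
    ring
  have h3 : HentCol (fun i k => τ i k / N) = -(C / N) + Real.log N := by
    rw [HentCol]
    simp only [← Finset.sum_div]
    have e : ∀ k : Fin K, ((∑ i, τ i k) / N) * Real.log ((∑ i, τ i k) / N)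
        = ((∑ i, τ i k) * Real.log (∑ i, τ i k)) / N - ((∑ i, τ i k) * Real.log N) / N :=
      fun k => key2 _ (Finset.sum_nonneg fun i _ => hτ i k)
    simp only [e]
    rw [Finset.sum_sub_distrib, ← Finset.sum_div, ← Finset.sum_div, ← hC]
    simp only [← Finset.sum_mul]
    rw [hcsum]
    field_simp
    ring
  have h4 : (∑ k, (∑ i, τ i k) * Real.log ((∑ i, τ i k) / N)) = C - (N : ℝ) * Real.log N := by
    have e : ∀ k : Fin K, (∑ i, τ i k) * Real.log ((∑ i, τ i k) / N)
        = (∑ i, τ i k) * Real.log (∑ i, τ i k) - (∑ i, τ i k) * Real.log N :=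
      fun k => xlog_div _ _ hNR (Finset.sum_nonneg fun i _ => hτ i k)
    simp only [e]
    rw [Finset.sum_sub_distrib, ← hC]
    simp only [← Finset.sum_mul]
    rw [hcsum]
  rw [ELBO, ← hS, ← hQ, h1, h2, h3, h4]
  field_simp
  ring

/-- with `α̂_k = N⁻¹ ∑_i τ_{ik}` and `T = τ/N`, the ELBO satisfies
`𝓛(τ,Θ,α̂) = (N²/2)[∑ log p(A_{ij}|Θ_{kl}) T_{ik}T_{jl} + (2/N)(H(T) − H(T^⊤1_N))] − N log N`;
consequently, maximizing the ELBO over `(τ,Θ)` with `α = α̂` is equivalent to minimizing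
`Jobj` over `T ∈ 𝒰_K(1_N/N)` and `Θ`. -/
theorem stmt9 (N K : ℕ) (hN : 0 < N) (hK : 0 < K)
    (A : Matrix (Fin N) (Fin N) ℝ)
    (hAsymm : ∀ i j, A i j = A j i)
    (hAdiag : ∀ i, A i i = 0)
    (hA01 : ∀ i j, A i j = 0 ∨ A i j = 1) :
    (∀ Θ : Matrix (Fin K) (Fin K) ℝ, (∀ k l, Θ k l ∈ Set.Ioo (0 : ℝ) 1) →
      ∀ τ : Fin N → Fin K → ℝ, (∀ i k, 0 ≤ τ i k) → (∀ i, ∑ k, τ i k = 1) →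
        ELBO A Θ τ (fun k => (∑ i, τ i k) / N) =
          ((N : ℝ) ^ 2 / 2) *
              (∑ i, ∑ j, ∑ k, ∑ l,
                  logpConv A Θ i j k l * (τ i k / N) * (τ j l / N)
                + (2 / (N : ℝ)) *
                  (Hent (fun i k => τ i k / N) - HentCol (fun i k => τ i k / N)))
            - (N : ℝ) * Real.log N) ∧
    (∀ Θ Θ' : Matrix (Fin K) (Fin K) ℝ,
      (∀ k l, Θ k l ∈ Set.Ioo (0 : ℝ) 1) → (∀ k l, Θ' k l ∈ Set.Ioo (0 : ℝ) 1) →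
      ∀ τ τ' : Fin N → Fin K → ℝ,
        (∀ i k, 0 ≤ τ i k) → (∀ i, ∑ k, τ i k = 1) →
        (∀ i k, 0 ≤ τ' i k) → (∀ i, ∑ k, τ' i k = 1) →
        (ELBO A Θ τ (fun k => (∑ i, τ i k) / N) ≤
            ELBO A Θ' τ' (fun k => (∑ i, τ' i k) / N) ↔
          Jobj A Θ' (fun i k => τ' i k / N) ≤ Jobj A Θ (fun i k => τ i k / N))) := by
  constructor
  · intro Θ _ τ hτ hτs
    exact key hN A Θ τ hτ hτs
  · intro Θ Θ' _ _ τ τ' hτ hτs hτ' hτ's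
    have e1 : ELBO A Θ τ (fun k => (∑ i, τ i k) / N) =
        -(((N : ℝ) ^ 2 / 2) * Jobj A Θ (fun i k => τ i k / N)) - (N : ℝ) * Real.log N := by
      rw [key hN A Θ τ hτ hτs, Jobj]; ring
    have e2 : ELBO A Θ' τ' (fun k => (∑ i, τ' i k) / N) =
        -(((N : ℝ) ^ 2 / 2) * Jobj A Θ' (fun i k => τ' i k / N)) - (N : ℝ) * Real.log N := by
      rw [key hN A Θ' τ' hτ' hτ's, Jobj]; ring
    rw [e1, e2, sub_le_sub_iff_right, neg_le_neg_iff]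
    exact mul_le_mul_iff_right₀ (by positivity)
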